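/- arXiv:2511.13496 — 3 statements merged into one kernel-verified Lean document; each statement's English description precedes it below -/
import Mathlib

section
/- Let c ∈ ℂ, n ≥ 1, and let g : [1,∞) → ℂ be locally integrable. Then for all t > 1, the operator Ψ_{n,c}[g](t) := ∫₀^1 (1−v)^n g(t^v) (∫₀^1 (1−z)^{n−1} t^{cz(1−v)} dz) dv admits the closed form Ψ_{n,c}[g](t) = (n−1)!/(c^n (log t)^{n+1}) · ∫₁ᵗ (g(u)/u) ( t^c u^{−c} − ∑_{k=0}^{n−1} (c (log t − log u))^k / k! ) du, provided c ≠ 0. -/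
open MeasureTheory intervalIntegral

/-- The operator `Ψ_{n,c}` applied to a function `g`. -/
noncomputable def PsiOp (n : ℕ) (c : ℂ) (g : ℝ → ℂ) (t : ℝ) : ℂ :=
  ∫ v in (0:ℝ)..1, ((1 - v : ℝ) : ℂ) ^ n * g (t ^ v) *
    ∫ z in (0:ℝ)..1, ((1 - z : ℝ) : ℂ) ^ (n - 1) * Complex.exp (c * z * (1 - v) * Real.log t)

lemma inner_int (m : ℕ) (a : ℂ) (ha : a ≠ 0) :
    (∫ z in (0:ℝ)..1, ((1 - z : ℝ) : ℂ) ^ m * Complex.exp (a * z))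
      = (Nat.factorial m : ℂ) / a ^ (m + 1) *
        (Complex.exp a - ∑ k ∈ Finset.range (m + 1), a ^ k / (Nat.factorial k : ℂ)) := by
  induction m with
  | zero =>
      simp only [pow_zero, one_mul]
      rw [integral_exp_mul_complex ha]
      simp [Nat.factorial]
      ring
  | succ m ih =>
      have hexp : ∀ z : ℝ, HasDerivAt (fun z : ℝ => Complex.exp (a * z))
          (Complex.exp (a * z) * a) z := by
        intro z
        apply (Complex.hasDerivAt_exp _).comp z
        simpa only [mul_one, id] using ((hasDerivAt_id (z : ℂ)).const_mul a).comp_ofReal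
      have h1 : ∀ z : ℝ, HasDerivAt (fun z : ℝ => ((1 - z : ℝ) : ℂ)) (-1) z := by
        intro z
        have h0 : HasDerivAt (fun z : ℝ => ((1 : ℂ) - (z : ℂ))) (-1) z := by
          simpa using (Complex.ofRealCLM.hasDerivAt (x := z)).const_sub 1
        refine h0.congr_of_eventuallyEq ?_
        filter_upwards with x; push_cast; ring
      have hpow : ∀ z : ℝ, HasDerivAt (fun z : ℝ => ((1 - z : ℝ) : ℂ) ^ (m + 1))
          ((((m : ℂ) + 1) * ((1 - z : ℝ) : ℂ) ^ m) * (-1)) z := by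
        intro z
        have := (hasDerivAt_pow (m + 1) (((1 - z : ℝ) : ℂ))).comp z (h1 z)
        simpa [Function.comp_def] using this
      have key := integral_eq_sub_of_hasDerivAt
        (f := fun z : ℝ => ((1 - z : ℝ) : ℂ) ^ (m + 1) * Complex.exp (a * z) / a)
        (f' := fun z : ℝ => ((((m : ℂ) + 1) * ((1 - z : ℝ) : ℂ) ^ m) * (-1) * Complex.exp (a * z)
            + ((1 - z : ℝ) : ℂ) ^ (m + 1) * (Complex.exp (a * z) * a)) / a)
        (a := 0) (b := 1)
        (fun z _ => (((hpow z).mul (hexp z)).div_const a))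
        (by apply Continuous.intervalIntegrable; fun_prop)
      have key2 : (∫ z in (0:ℝ)..1, (((1 - z : ℝ) : ℂ) ^ (m + 1) * Complex.exp (a * z)
            - (((m : ℂ) + 1) / a) * (((1 - z : ℝ) : ℂ) ^ m * Complex.exp (a * z))))
          = -(1 / a) := by
        have heq : Set.EqOn
            (fun z : ℝ => (((1 - z : ℝ) : ℂ) ^ (m + 1) * Complex.exp (a * z)
              - (((m : ℂ) + 1) / a) * (((1 - z : ℝ) : ℂ) ^ m * Complex.exp (a * z))))
            (fun z : ℝ => ((((m : ℂ) + 1) * ((1 - z : ℝ) : ℂ) ^ m) * (-1) * Complex.exp (a * z)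
              + ((1 - z : ℝ) : ℂ) ^ (m + 1) * (Complex.exp (a * z) * a)) / a)
            (Set.uIcc (0:ℝ) 1) := by
          intro z _
          field_simp
          ring
        rw [intervalIntegral.integral_congr heq, key]
        norm_num
      have h1' : IntervalIntegrable (fun z : ℝ => ((1 - z : ℝ) : ℂ) ^ (m + 1) * Complex.exp (a * z))
          volume 0 1 := by apply Continuous.intervalIntegrable; fun_prop
      have h2' : IntervalIntegrable (fun z : ℝ => ((1 - z : ℝ) : ℂ) ^ m * Complex.exp (a * z))
          volume 0 1 := by apply Continuous.intervalIntegrable; fun_prop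
      rw [intervalIntegral.integral_sub h1' (h2'.const_mul _),
        intervalIntegral.integral_const_mul, ih] at key2
      have hfac : (Nat.factorial m : ℂ) ≠ 0 := Nat.cast_ne_zero.mpr (Nat.factorial_ne_zero m)
      have hfac1 : (Nat.factorial (m + 1) : ℂ) ≠ 0 :=
        Nat.cast_ne_zero.mpr (Nat.factorial_ne_zero (m + 1))
      have hI : (∫ z in (0:ℝ)..1, ((1 - z : ℝ) : ℂ) ^ (m + 1) * Complex.exp (a * z))
          = -(1 / a) + (((m : ℂ) + 1) / a) *
            ((Nat.factorial m : ℂ) / a ^ (m + 1) *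
              (Complex.exp a - ∑ k ∈ Finset.range (m + 1), a ^ k / (Nat.factorial k : ℂ))) := by
        linear_combination key2
      have halg : ∀ E S : ℂ,
          -(1/a) + (((m:ℂ)+1)/a) * ((Nat.factorial m : ℂ)/a^(m+1) * (E - S))
            = (Nat.factorial (m+1) : ℂ)/a^(m+1+1)
              * (E - (S + a^(m+1)/(Nat.factorial (m+1) : ℂ))) := by
        intro E S
        field_simp
        push_cast [Nat.factorial_succ]
        ring
      rw [hI, Finset.sum_range_succ _ (m + 1)]
      exact halg _ _

theorem stmt_7 (n : ℕ) (hn : 1 ≤ n) (c : ℂ) (hc : c ≠ 0)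
    (g : ℝ → ℂ) (hloc : LocallyIntegrableOn g (Set.Ici 1)) :
    ∀ t : ℝ, 1 < t →
      PsiOp n c g t
        = (Nat.factorial (n - 1) : ℂ) / (c ^ n * (Real.log t : ℂ) ^ (n + 1)) *
          ∫ u in (1:ℝ)..t, g u / (u : ℂ) *
            ((t : ℂ) ^ c * (u : ℂ) ^ (-c)
              - ∑ k ∈ Finset.range n,
                  (c * ((Real.log t : ℂ) - (Real.log u : ℂ))) ^ k / (Nat.factorial k : ℂ)) := by
  obtain ⟨m, rfl⟩ : ∃ m, n = m + 1 := ⟨n - 1, (Nat.succ_pred_eq_of_pos hn).symm⟩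
  intro t ht
  have ht0 : (0:ℝ) < t := lt_trans one_pos ht
  have hL : 0 < Real.log t := Real.log_pos ht
  have hLne : ((Real.log t : ℝ) : ℂ) ≠ 0 := Complex.ofReal_ne_zero.mpr hL.ne'
  set L : ℝ := Real.log t with hLdef
  set P : ℝ → ℂ := fun v =>
    Complex.exp (c * ((1 - v : ℝ) : ℂ) * (L : ℂ))
      - ∑ k ∈ Finset.range (m + 1),
          (c * ((1 - v : ℝ) : ℂ) * (L : ℂ)) ^ k / (Nat.factorial k : ℂ) with hP
  set C : ℂ := (Nat.factorial m : ℂ) / (c ^ (m + 1) * (L : ℂ) ^ (m + 1)) with hC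
  -- Step A : left-hand side
  have stepA : PsiOp (m + 1) c g t
      = ∫ v in Set.Ioo (0:ℝ) 1, C * (g (t ^ v) * P v) := by
    rw [PsiOp, intervalIntegral.integral_of_le (by norm_num : (0:ℝ) ≤ 1),
      MeasureTheory.integral_Ioc_eq_integral_Ioo]
    refine setIntegral_congr_fun measurableSet_Ioo (fun v hv => ?_)
    obtain ⟨hv0, hv1⟩ := hv
    have hvne : ((1 - v : ℝ) : ℂ) ≠ 0 :=
      Complex.ofReal_ne_zero.mpr (sub_ne_zero.mpr (ne_of_gt hv1))
    set a : ℂ := c * ((1 - v : ℝ) : ℂ) * (L : ℂ) with hadef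
    have ha : a ≠ 0 := mul_ne_zero (mul_ne_zero hc hvne) hLne
    have hinner : (∫ z in (0:ℝ)..1, ((1 - z : ℝ) : ℂ) ^ (m + 1 - 1) *
          Complex.exp (c * z * (1 - v) * L))
        = (Nat.factorial m : ℂ) / a ^ (m + 1) *
          (Complex.exp a - ∑ k ∈ Finset.range (m + 1), a ^ k / (Nat.factorial k : ℂ)) := by
      rw [← inner_int m a ha]
      refine intervalIntegral.integral_congr (fun z _ => ?_)
      simp only [Nat.add_sub_cancel]
      congr 1
      rw [hadef]; push_cast; ring
    have hPv : Complex.exp a - ∑ k ∈ Finset.range (m + 1), a ^ k / (Nat.factorial k : ℂ)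
        = P v := by rw [hP]
    rw [hinner, hPv]
    have hpow : a ^ (m + 1) = c ^ (m + 1) * ((1 - v : ℝ) : ℂ) ^ (m + 1) * (L : ℂ) ^ (m + 1) := by
      rw [hadef]; ring
    rw [hpow, hC]
    have h2 : (1 - (v:ℂ)) ≠ 0 := by push_cast at hvne; exact hvne
    field_simp [h2]
  -- change of variables for the right-hand side
  have himg : (fun v : ℝ => Real.exp (v * L)) '' Set.Ioo 0 1 = Set.Ioo 1 t := by
    ext u
    constructor
    · rintro ⟨v, ⟨hv0, hv1⟩, rfl⟩
      constructor
      · have : 0 < v * L := mul_pos hv0 hL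
        simpa using Real.exp_lt_exp.mpr this
      · have : v * L < L := by nlinarith
        calc Real.exp (v * L) < Real.exp L := Real.exp_lt_exp.mpr this
        _ = t := Real.exp_log ht0
    · rintro ⟨hu1, hut⟩
      have hu0 : 0 < u := lt_trans one_pos hu1
      refine ⟨Real.log u / L, ⟨?_, ?_⟩, ?_⟩
      · exact div_pos (Real.log_pos hu1) hL
      · rw [div_lt_one hL]; exact Real.log_lt_log hu0 hut
      · show Real.exp (Real.log u / L * L) = u
        rw [div_mul_cancel₀ _ hL.ne', Real.exp_log hu0]
  have hderiv : ∀ v ∈ Set.Ioo (0:ℝ) 1,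
      HasDerivWithinAt (fun v : ℝ => Real.exp (v * L)) (Real.exp (v * L) * L)
        (Set.Ioo (0:ℝ) 1) v := by
    intro v _
    exact ((Real.hasDerivAt_exp (v * L)).comp v
      (by simpa using (hasDerivAt_id v).mul_const L)).hasDerivWithinAt
  have hinj : Set.InjOn (fun v : ℝ => Real.exp (v * L)) (Set.Ioo 0 1) := by
    have hmono : StrictMonoOn (fun v : ℝ => Real.exp (v * L)) (Set.Ioo 0 1) :=
      fun x _ y _ hxy => Real.exp_lt_exp.mpr (mul_lt_mul_of_pos_right hxy hL)
    exact hmono.injOn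
  have stepB : (∫ u in (1:ℝ)..t, g u / (u : ℂ) *
        ((t : ℂ) ^ c * (u : ℂ) ^ (-c)
          - ∑ k ∈ Finset.range (m + 1),
              (c * ((L : ℝ) - (Real.log u : ℝ)) : ℂ) ^ k / (Nat.factorial k : ℂ)))
      = ∫ v in Set.Ioo (0:ℝ) 1, (L : ℂ) * (g (t ^ v) * P v) := by
    rw [intervalIntegral.integral_of_le ht.le, MeasureTheory.integral_Ioc_eq_integral_Ioo,
      ← himg, integral_image_eq_integral_abs_deriv_smul measurableSet_Ioo hderiv hinj]
    refine setIntegral_congr_fun measurableSet_Ioo (fun v hv => ?_)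
    obtain ⟨hv0, hv1⟩ := hv
    set u : ℝ := Real.exp (v * L) with hu
    have hu0 : 0 < u := Real.exp_pos _
    have huC : (u : ℂ) ≠ 0 := Complex.ofReal_ne_zero.mpr hu0.ne'
    have hlogu : Real.log u = v * L := Real.log_exp _
    have htv : t ^ v = u := by
      rw [hu, Real.rpow_def_of_pos ht0, mul_comm]
    have habs : |Real.exp (v * L) * L| = u * L := by
      rw [abs_of_pos (mul_pos hu0 hL)]
    have hcpow_t : (t : ℂ) ^ c = Complex.exp ((L : ℂ) * c) := by
      rw [Complex.cpow_def_of_ne_zero (Complex.ofReal_ne_zero.mpr ht0.ne'),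
        ← Complex.ofReal_log ht0.le]
    have hcpow_u : (u : ℂ) ^ (-c) = Complex.exp (-(((v * L : ℝ) : ℂ) * c)) := by
      rw [Complex.cpow_def_of_ne_zero huC, ← Complex.ofReal_log hu0.le, hlogu]
      ring_nf
    have hparen : (t : ℂ) ^ c * (u : ℂ) ^ (-c) = Complex.exp (c * ((1 - v : ℝ) : ℂ) * (L : ℂ)) := by
      rw [hcpow_t, hcpow_u, ← Complex.exp_add]
      congr 1
      push_cast
      ring
    have hsum : ∀ k : ℕ, (c * ((L : ℝ) - (Real.log u : ℝ)) : ℂ) ^ k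
        = (c * ((1 - v : ℝ) : ℂ) * (L : ℂ)) ^ k := by
      intro k
      congr 1
      rw [hlogu]
      push_cast
      ring
    rw [habs, Complex.real_smul, htv, hparen]
    simp only [hP, hsum]
    push_cast
    field_simp
  -- now combine
  rw [stepA, MeasureTheory.integral_const_mul]
  have hrw : (∫ u in (1:ℝ)..t, g u / (u : ℂ) *
        ((t : ℂ) ^ c * (u : ℂ) ^ (-c)
          - ∑ k ∈ Finset.range (m + 1),
              (c * ((Real.log t : ℂ) - (Real.log u : ℂ))) ^ k / (Nat.factorial k : ℂ)))
      = (L : ℂ) * ∫ v in Set.Ioo (0:ℝ) 1, g (t ^ v) * P v := by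
    rw [← MeasureTheory.integral_const_mul, ← stepB]
  rw [hrw]
  simp only [Nat.add_sub_cancel, hC]
  have hLpow : ((L : ℝ) : ℂ) ^ (m + 1 + 1) = ((L : ℝ) : ℂ) ^ (m + 1) * (L : ℂ) := by ring
  field_simp
  ring
end

section
/- Let c ∈ ℂ with c ≠ 0, n ≥ 1, and let f : [1,∞) → ℂ be absolutely continuous (on compact subintervals) with f(1) = 0. Then for all t > 1, Ψ_{n,c}[ u ↦ u f′(u) − c f(u) ](t) = (1/ log t) ∫₀^1 (1−v)^{n−1} f(t^v) dv. -/
open MeasureTheory intervalIntegral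

lemma tri_fubini (s : ℝ) (hs : 0 ≤ s) (φ : ℝ → ℝ → ℂ)
    (hm : Integrable (fun p : ℝ × ℝ => φ p.1 p.2)
      ((volume.restrict (Set.Ioc 0 s)).prod (volume.restrict (Set.Ioc 0 s)))) :
    (∫ v in (0:ℝ)..s, ∫ w in (0:ℝ)..v, φ v w) = ∫ w in (0:ℝ)..s, ∫ v in w..s, φ v w := by
  have hswap := MeasureTheory.integral_integral_swap
    (f := fun v w => Set.indicator {q : ℝ × ℝ | q.2 ≤ q.1} (fun q => φ q.1 q.2) (v, w))
    (μ := volume.restrict (Set.Ioc 0 s)) (ν := volume.restrict (Set.Ioc 0 s))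
    (hm.indicator (measurableSet_le measurable_snd measurable_fst))
  rw [intervalIntegral.integral_of_le hs, intervalIntegral.integral_of_le hs]
  calc ∫ v in Set.Ioc 0 s, ∫ w in (0:ℝ)..v, φ v w
      = ∫ v in Set.Ioc 0 s, ∫ w in Set.Ioc 0 s,
          Set.indicator {q : ℝ × ℝ | q.2 ≤ q.1} (fun q => φ q.1 q.2) (v, w) := by
        apply setIntegral_congr_fun measurableSet_Ioc
        intro v hv
        show (∫ w in (0:ℝ)..v, φ v w) = _
        simp only []
        have h1 : (∫ w in (0:ℝ)..v, φ v w) = ∫ w in Set.Ioc 0 v, φ v w :=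
          intervalIntegral.integral_of_le hv.1.le
        rw [h1]
        have h2 : ∀ w : ℝ, Set.indicator {q : ℝ × ℝ | q.2 ≤ q.1} (fun q => φ q.1 q.2) (v, w)
            = Set.indicator (Set.Iic v) (φ v) w := by
          intro w
          by_cases hw : w ≤ v
          · rw [Set.indicator_of_mem (by exact hw) , Set.indicator_of_mem (by exact hw)]
          · rw [Set.indicator_of_notMem (by exact hw), Set.indicator_of_notMem (by exact hw)]
        simp only [h2]
        rw [MeasureTheory.setIntegral_indicator measurableSet_Iic]
        congr 1
        rw [Set.Ioc_inter_Iic, min_eq_right hv.2]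
    _ = ∫ w in Set.Ioc 0 s, ∫ v in Set.Ioc 0 s,
          Set.indicator {q : ℝ × ℝ | q.2 ≤ q.1} (fun q => φ q.1 q.2) (v, w) := hswap
    _ = ∫ w in Set.Ioc 0 s, ∫ v in w..s, φ v w := by
        apply setIntegral_congr_fun measurableSet_Ioc
        intro w hw
        show _ = (∫ v in w..s, φ v w)
        have h2 : ∀ v : ℝ, Set.indicator {q : ℝ × ℝ | q.2 ≤ q.1} (fun q => φ q.1 q.2) (v, w)
            = Set.indicator (Set.Ici w) (fun v => φ v w) v := by
          intro v
          by_cases hv : w ≤ v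
          · rw [Set.indicator_of_mem (by exact hv), Set.indicator_of_mem (by exact hv)]
          · rw [Set.indicator_of_notMem (by exact hv), Set.indicator_of_notMem (by exact hv)]
        simp only [h2]
        rw [MeasureTheory.setIntegral_indicator measurableSet_Ici]
        have h3 : Set.Ioc 0 s ∩ Set.Ici w = Set.Icc w s := by
          ext v
          simp only [Set.mem_inter_iff, Set.mem_Ioc, Set.mem_Ici, Set.mem_Icc]
          constructor
          · rintro ⟨⟨_, h1⟩, h2⟩; exact ⟨h2, h1⟩
          · rintro ⟨h1, h2⟩; exact ⟨⟨lt_of_lt_of_le hw.1 h1, h2⟩, h1⟩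
        rw [h3, MeasureTheory.integral_Icc_eq_integral_Ioc,
          ← intervalIntegral.integral_of_le hw.2]


noncomputable def Haux (a : ℂ) (n : ℕ) (s : ℝ) : ℂ :=
  ∫ w in (0:ℝ)..s, ((s - w : ℝ) : ℂ) ^ (n - 1) * Complex.exp (a * w)

lemma Haux_cont (a : ℂ) (n : ℕ) : Continuous (Haux a n) := by
  apply intervalIntegral.continuous_parametric_intervalIntegral_of_continuous
    (f := fun (s : ℝ) (w : ℝ) => ((s - w : ℝ) : ℂ) ^ (n - 1) * Complex.exp (a * w))
  · apply Continuous.mul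
    · exact (Complex.continuous_ofReal.comp (continuous_fst.sub continuous_snd)).pow _
    · exact Complex.continuous_exp.comp (continuous_const.mul
        (Complex.continuous_ofReal.comp continuous_snd))
  · exact continuous_id

-- inner monomial integral
lemma mono_int (n : ℕ) (hn : 1 ≤ n) (w s : ℝ) :
    (∫ σ in w..s, ((σ - w : ℝ) : ℂ) ^ (n - 1)) = ((s - w : ℝ) : ℂ) ^ n / n := by
  have hd : ∀ σ : ℝ, HasDerivAt (fun σ : ℝ => ((σ - w : ℝ) : ℂ) ^ n / n)
      (((σ - w : ℝ) : ℂ) ^ (n - 1)) σ := by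
    intro σ
    have h1 : HasDerivAt (fun z : ℂ => (z - (w:ℂ)) ^ n / n)
        ((n : ℂ) * ((σ:ℂ) - w) ^ (n - 1) * 1 / n) (σ : ℂ) :=
      (((hasDerivAt_id ((σ:ℝ) : ℂ)).sub_const (w:ℂ)).pow n).div_const n
    have h2 := h1.comp_ofReal
    have hne : (n : ℂ) ≠ 0 := Nat.cast_ne_zero.mpr (by omega)
    convert h2 using 2 with σ'
    · push_cast; ring
    · field_simp
      rw [Complex.ofReal_sub]
  rw [intervalIntegral.integral_eq_sub_of_hasDerivAt (fun σ _ => hd σ)]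
  · simp [sub_self, zero_pow (by omega : n ≠ 0)]
  · apply Continuous.intervalIntegrable
    exact (Complex.continuous_ofReal.comp (continuous_id.sub continuous_const)).pow _


lemma keyFTC (a : ℂ) (n : ℕ) (hn : 1 ≤ n) (s : ℝ) :
    (∫ w in (0:ℝ)..s,
      ((n : ℂ) * ((s - w : ℝ) : ℂ) ^ (n - 1) - a * ((s - w : ℝ) : ℂ) ^ n) * Complex.exp (a * w))
      = (s : ℂ) ^ n := by
  have hd : ∀ w : ℝ, HasDerivAt (fun w : ℝ => -(((s - w : ℝ) : ℂ) ^ n) * Complex.exp (a * w))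
      (((n : ℂ) * ((s - w : ℝ) : ℂ) ^ (n - 1) - a * ((s - w : ℝ) : ℂ) ^ n)
        * Complex.exp (a * w)) w := by
    intro w
    have h1 : HasDerivAt (fun z : ℂ => -(((s:ℂ) - z) ^ n))
        (-((n : ℂ) * ((s:ℂ) - w) ^ (n - 1) * (-1))) (w : ℂ) :=
      (((hasDerivAt_id ((w:ℝ) : ℂ)).const_sub (s:ℂ)).pow n).neg
    have h2 : HasDerivAt (fun z : ℂ => Complex.exp (a * z))
        (Complex.exp (a * (w:ℂ)) * a) (w : ℂ) := by
      have h := (Complex.hasDerivAt_exp (a * (w:ℂ))).comp (w:ℂ)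
        ((hasDerivAt_id ((w:ℝ) : ℂ)).const_mul a)
      simp only [mul_one] at h
      exact h
    have h3 := (h1.mul h2).comp_ofReal
    convert h3 using 1
    · funext w'; push_cast; simp only [Pi.mul_apply]
    · push_cast; ring
  rw [intervalIntegral.integral_eq_sub_of_hasDerivAt (fun w _ => hd w)]
  · simp [sub_self, zero_pow (by omega : n ≠ 0), Complex.exp_zero]
  · apply Continuous.intervalIntegrable
    apply Continuous.mul
    · apply Continuous.sub
      · exact continuous_const.mul
          ((Complex.continuous_ofReal.comp (continuous_const.sub continuous_id)).pow _)
      · exact continuous_const.mul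
          ((Complex.continuous_ofReal.comp (continuous_const.sub continuous_id)).pow _)
    · exact Complex.continuous_exp.comp (continuous_const.mul Complex.continuous_ofReal)
lemma cont_int_prod (s : ℝ) (φ : ℝ → ℝ → ℂ)
    (hφ : Continuous fun p : ℝ × ℝ => φ p.1 p.2) :
    Integrable (fun p : ℝ × ℝ => φ p.1 p.2)
      ((volume.restrict (Set.Ioc 0 s)).prod (volume.restrict (Set.Ioc 0 s))) := by
  rw [Measure.prod_restrict, ← Measure.volume_eq_prod]
  exact (hφ.continuousOn.integrableOn_compact (isCompact_Icc.prod isCompact_Icc)).mono_set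
    (Set.prod_mono Set.Ioc_subset_Icc_self Set.Ioc_subset_Icc_self)

lemma keyD (a : ℂ) (n : ℕ) (hn : 1 ≤ n) (s : ℝ) (hs : 0 ≤ s) :
    Haux a n s = (s : ℂ) ^ n / n + a * ∫ σ in (0:ℝ)..s, Haux a n σ := by
  have hne : (n : ℂ) ≠ 0 := Nat.cast_ne_zero.mpr (by omega)
  have hc1 : Continuous fun w : ℝ => ((s - w : ℝ) : ℂ) ^ (n - 1) * Complex.exp (a * w) := by
    apply Continuous.mul
    · exact (Complex.continuous_ofReal.comp (continuous_const.sub continuous_id)).pow _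
    · exact Complex.continuous_exp.comp (continuous_const.mul Complex.continuous_ofReal)
  have hc2 : Continuous fun w : ℝ => ((s - w : ℝ) : ℂ) ^ n * Complex.exp (a * w) := by
    apply Continuous.mul
    · exact (Complex.continuous_ofReal.comp (continuous_const.sub continuous_id)).pow _
    · exact Complex.continuous_exp.comp (continuous_const.mul Complex.continuous_ofReal)
  have h1 : (∫ σ in (0:ℝ)..s, Haux a n σ)
      = ∫ w in (0:ℝ)..s, (((s - w : ℝ) : ℂ) ^ n / n) * Complex.exp (a * w) := by
    have htf := tri_fubini s hs
      (fun σ w => ((σ - w : ℝ) : ℂ) ^ (n - 1) * Complex.exp (a * w))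
      (cont_int_prod s (fun σ w => ((σ - w : ℝ) : ℂ) ^ (n - 1) * Complex.exp (a * w)) (by
        apply Continuous.mul
        · exact (Complex.continuous_ofReal.comp (continuous_fst.sub continuous_snd)).pow _
        · exact Complex.continuous_exp.comp (continuous_const.mul
            (Complex.continuous_ofReal.comp continuous_snd))))
    simp only [Haux]
    rw [htf]
    apply intervalIntegral.integral_congr
    intro w _
    show (∫ σ in w..s, ((σ - w : ℝ) : ℂ) ^ (n - 1) * Complex.exp (a * w)) = _
    rw [intervalIntegral.integral_mul_const, mono_int n hn w s]
  have h3 : (∫ w in (0:ℝ)..s,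
        ((n : ℂ) * ((s - w : ℝ) : ℂ) ^ (n - 1) - a * ((s - w : ℝ) : ℂ) ^ n)
          * Complex.exp (a * w))
      = (n : ℂ) * Haux a n s
        - a * ∫ w in (0:ℝ)..s, ((s - w : ℝ) : ℂ) ^ n * Complex.exp (a * w) := by
    have : (fun w : ℝ =>
        ((n : ℂ) * ((s - w : ℝ) : ℂ) ^ (n - 1) - a * ((s - w : ℝ) : ℂ) ^ n)
          * Complex.exp (a * w))
        = fun w : ℝ => (n : ℂ) * (((s - w : ℝ) : ℂ) ^ (n - 1) * Complex.exp (a * w))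
          - a * (((s - w : ℝ) : ℂ) ^ n * Complex.exp (a * w)) := by
      funext w; ring
    rw [this, intervalIntegral.integral_sub
        ((hc1.intervalIntegrable 0 s).const_mul _) ((hc2.intervalIntegrable 0 s).const_mul _),
      intervalIntegral.integral_const_mul, intervalIntegral.integral_const_mul]
    rfl
  have h5 : (n : ℂ) * Haux a n s
      - a * (∫ w in (0:ℝ)..s, ((s - w : ℝ) : ℂ) ^ n * Complex.exp (a * w)) = (s : ℂ) ^ n := by
    rw [← h3]; exact keyFTC a n hn s
  have h4 : (∫ w in (0:ℝ)..s, (((s - w : ℝ) : ℂ) ^ n / n) * Complex.exp (a * w))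
      = (∫ w in (0:ℝ)..s, ((s - w : ℝ) : ℂ) ^ n * Complex.exp (a * w)) / n := by
    rw [eq_div_iff hne, ← intervalIntegral.integral_mul_const]
    apply intervalIntegral.integral_congr
    intro w _
    field_simp
  set J := ∫ w in (0:ℝ)..s, ((s - w : ℝ) : ℂ) ^ n * Complex.exp (a * w) with hJdef
  rw [h1, h4]
  field_simp
  linear_combination h5
lemma lemC (a : ℂ) (n : ℕ) (hn : 1 ≤ n) (r : ℝ) :
    ((r : ℝ) : ℂ) ^ n * ∫ z in (0:ℝ)..1, ((1 - z : ℝ) : ℂ) ^ (n - 1)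
        * Complex.exp (a * r * z)
      = Haux a n r := by
  have hs := intervalIntegral.smul_integral_comp_mul_left
      (f := fun w : ℝ => ((r - w : ℝ) : ℂ) ^ (n - 1) * Complex.exp (a * w))
      (a := (0:ℝ)) (b := 1) r
  have h2 : (∫ z in (0:ℝ)..1,
        (fun w : ℝ => ((r - w : ℝ) : ℂ) ^ (n - 1) * Complex.exp (a * w)) (r * z))
      = (r : ℂ) ^ (n - 1) * ∫ z in (0:ℝ)..1, ((1 - z : ℝ) : ℂ) ^ (n - 1)
          * Complex.exp (a * r * z) := by
    rw [← intervalIntegral.integral_const_mul]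
    apply intervalIntegral.integral_congr
    intro z _
    show ((r - r * z : ℝ) : ℂ) ^ (n - 1) * Complex.exp (a * ((r * z : ℝ) : ℂ)) = _
    push_cast
    rw [show a * ((r : ℂ) * (z : ℂ)) = a * r * z from (mul_assoc _ _ _).symm,
      show ((r : ℂ) - (r : ℂ) * (z : ℂ)) = (r : ℂ) * (1 - (z : ℂ)) from by ring, mul_pow]
    ring
  have hr : ((r : ℝ) : ℂ) ^ n = (r : ℂ) * (r : ℂ) ^ (n - 1) := by
    conv_lhs => rw [show n = (n - 1) + 1 from by omega]
    rw [pow_succ]; ring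
  rw [hr, mul_assoc, ← h2, ← Complex.real_smul, hs]
  simp [Haux]

lemma starstar (a : ℂ) (n : ℕ) (hn : 1 ≤ n) (w : ℝ) (hw : w ∈ Set.Icc (0:ℝ) 1) :
    Haux a n (1 - w) = ((1 - w : ℝ) : ℂ) ^ n / n + a * ∫ v in w..1, Haux a n (1 - v) := by
  have h1 := keyD a n hn (1 - w) (by linarith [hw.2])
  rw [h1]
  congr 2
  rw [intervalIntegral.integral_comp_sub_left (f := Haux a n) (a := w) (b := 1) 1]
  norm_num
lemma rpow_image (t : ℝ) (ht : 1 < t) (v : ℝ) (hv : 0 ≤ v) :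
    (fun w : ℝ => t ^ w) '' Set.Ioc 0 v = Set.Ioc 1 (t ^ v) := by
  ext u
  constructor
  · rintro ⟨w, ⟨hw0, hwv⟩, rfl⟩
    constructor
    · calc (1:ℝ) = t ^ (0:ℝ) := (Real.rpow_zero t).symm
      _ < t ^ w := (Real.rpow_lt_rpow_left_iff ht).mpr hw0
    · exact (Real.rpow_le_rpow_left_iff ht).mpr hwv
  · rintro ⟨hu1, huv⟩
    have ht0 : (0:ℝ) < t := by linarith
    refine ⟨Real.logb t u, ⟨Real.logb_pos ht hu1, ?_⟩,
      Real.rpow_logb ht0 (by linarith) (by linarith)⟩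
    rw [← Real.rpow_le_rpow_left_iff (x := t) ht,
      Real.rpow_logb ht0 (by linarith) (by linarith)]
    exact huv

lemma rpow_hasDeriv (t : ℝ) (ht : 1 < t) (s : Set ℝ) :
    ∀ w ∈ s, HasDerivWithinAt (fun w : ℝ => t ^ w) (t ^ w * Real.log t) s w :=
  fun w _ => ((Real.hasStrictDerivAt_const_rpow (by linarith) w).hasDerivAt).hasDerivWithinAt

lemma rpow_injOn (t : ℝ) (ht : 1 < t) (s : Set ℝ) :
    Set.InjOn (fun w : ℝ => t ^ w) s := by
  have : StrictMono (fun w : ℝ => t ^ w) :=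
    fun x y hxy => (Real.rpow_lt_rpow_left_iff ht).mpr hxy
  exact (this.injective).injOn

lemma subst_int (t : ℝ) (ht : 1 < t) (v : ℝ) (hv : 0 ≤ v) (g : ℝ → ℂ) :
    ∫ u in Set.Ioc 1 (t ^ v), g u
      = ∫ w in Set.Ioc 0 v, (t ^ w * Real.log t : ℝ) • g (t ^ w) := by
  rw [← rpow_image t ht v hv,
    MeasureTheory.integral_image_eq_integral_abs_deriv_smul measurableSet_Ioc
      (rpow_hasDeriv t ht _) (rpow_injOn t ht _) g]
  apply setIntegral_congr_fun measurableSet_Ioc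
  intro w _
  have : |t ^ w * Real.log t| = t ^ w * Real.log t :=
    abs_of_pos (mul_pos (Real.rpow_pos_of_pos (by linarith) w) (Real.log_pos ht))
  show |t ^ w * Real.log t| • g (t ^ w) = _
  rw [this]

lemma subst_intble (t : ℝ) (ht : 1 < t) (v : ℝ) (hv : 0 ≤ v) (g : ℝ → ℂ)
    (hg : IntegrableOn g (Set.Ioc 1 (t ^ v))) :
    IntegrableOn (fun w => (t ^ w * Real.log t : ℝ) • g (t ^ w)) (Set.Ioc 0 v) := by
  rw [← rpow_image t ht v hv] at hg
  have := (MeasureTheory.integrableOn_image_iff_integrableOn_abs_deriv_smul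
    measurableSet_Ioc (rpow_hasDeriv t ht _) (rpow_injOn t ht _) g).mp hg
  apply this.congr_fun ?_ measurableSet_Ioc
  intro w _
  have : |t ^ w * Real.log t| = t ^ w * Real.log t :=
    abs_of_pos (mul_pos (Real.rpow_pos_of_pos (by linarith) w) (Real.log_pos ht))
  show |t ^ w * Real.log t| • g (t ^ w) = _
  rw [this]

lemma psi_rewrite (n : ℕ) (hn : 1 ≤ n) (c : ℂ) (g : ℝ → ℂ) (t : ℝ) :
    PsiOp n c g t
      = ∫ v in (0:ℝ)..1, Haux (c * (Real.log t : ℝ)) n (1 - v) * g (t ^ v) := by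
  unfold PsiOp
  apply intervalIntegral.integral_congr
  intro v _
  show ((1 - v : ℝ) : ℂ) ^ n * g (t ^ v) *
      (∫ z in (0:ℝ)..1, ((1 - z : ℝ) : ℂ) ^ (n - 1)
        * Complex.exp (c * z * (1 - (v:ℂ)) * (Real.log t : ℝ)))
    = Haux (c * (Real.log t : ℝ)) n (1 - v) * g (t ^ v)
  rw [← lemC (c * (Real.log t : ℝ)) n hn (1 - v), mul_right_comm]
  congr 1
  congr 1
  apply intervalIntegral.integral_congr
  intro z _
  show ((1 - z : ℝ) : ℂ) ^ (n - 1) * Complex.exp (c * z * (1 - (v:ℂ)) * (Real.log t : ℝ))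
    = ((1 - z : ℝ) : ℂ) ^ (n - 1)
      * Complex.exp (c * (Real.log t : ℝ) * ((1 - v : ℝ) : ℂ) * z)
  congr 2
  push_cast
  ring

lemma core (n : ℕ) (hn : 1 ≤ n) (a : ℂ) (ψ : ℝ → ℂ)
    (hψ : IntegrableOn ψ (Set.Ioc 0 1)) (F : ℝ → ℂ)
    (hF : ∀ v ∈ Set.Icc (0:ℝ) 1, F v = ∫ w in Set.Ioc 0 v, ψ w) :
    (∫ v in (0:ℝ)..1, (((1 - v : ℝ) : ℂ) ^ (n - 1) + a * Haux a n (1 - v)) * F v)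
      = ∫ w in (0:ℝ)..1, Haux a n (1 - w) * ψ w := by
  have hαcont : Continuous fun v : ℝ =>
      ((1 - v : ℝ) : ℂ) ^ (n - 1) + a * Haux a n (1 - v) := by
    apply Continuous.add
    · exact (Complex.continuous_ofReal.comp (continuous_const.sub continuous_id)).pow _
    · exact continuous_const.mul ((Haux_cont a n).comp (continuous_const.sub continuous_id))
  set α := fun v : ℝ => ((1 - v : ℝ) : ℂ) ^ (n - 1) + a * Haux a n (1 - v) with hα
  have step1 : (∫ v in (0:ℝ)..1, α v * F v)
      = ∫ v in (0:ℝ)..1, ∫ w in (0:ℝ)..v, α v * ψ w := by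
    apply intervalIntegral.integral_congr
    intro v hv
    rw [Set.uIcc_of_le zero_le_one] at hv
    show α v * F v = ∫ w in (0:ℝ)..v, α v * ψ w
    rw [intervalIntegral.integral_const_mul, intervalIntegral.integral_of_le hv.1, hF v hv]
  have hint : Integrable (fun p : ℝ × ℝ => α p.1 * ψ p.2)
      ((volume.restrict (Set.Ioc 0 1)).prod (volume.restrict (Set.Ioc 0 1))) :=
    Integrable.mul_prod (hαcont.integrableOn_Ioc) hψ
  have step2 := tri_fubini 1 zero_le_one (fun v w => α v * ψ w) hint
  have step3 : (∫ w in (0:ℝ)..1, ∫ v in w..1, α v * ψ w)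
      = ∫ w in (0:ℝ)..1, Haux a n (1 - w) * ψ w := by
    apply intervalIntegral.integral_congr
    intro w hw
    rw [Set.uIcc_of_le zero_le_one] at hw
    show (∫ v in w..1, α v * ψ w) = Haux a n (1 - w) * ψ w
    rw [intervalIntegral.integral_mul_const]
    congr 1
    have hmono : (∫ v in w..1, ((1 - v : ℝ) : ℂ) ^ (n - 1)) = ((1 - w : ℝ) : ℂ) ^ n / n := by
      rw [intervalIntegral.integral_comp_sub_left (fun x : ℝ => ((x : ℝ) : ℂ) ^ (n - 1)) 1]
      have h := mono_int n hn 0 (1 - w)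
      simp only [sub_zero] at h
      rw [show (1:ℝ) - 1 = 0 by norm_num]
      exact h
    have hi1 : IntervalIntegrable (fun v : ℝ => ((1 - v : ℝ) : ℂ) ^ (n - 1)) volume w 1 :=
      ((Complex.continuous_ofReal.comp (continuous_const.sub continuous_id)).pow
        _).intervalIntegrable w 1
    have hi2 : IntervalIntegrable (fun v : ℝ => a * Haux a n (1 - v)) volume w 1 :=
      ((continuous_const.mul ((Haux_cont a n).comp
        (continuous_const.sub continuous_id)))).intervalIntegrable w 1
    rw [hα]
    rw [intervalIntegral.integral_add hi1 hi2, hmono, intervalIntegral.integral_const_mul]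
    exact (starstar a n hn w hw).symm
  exact step1.trans (step2.trans step3)

theorem stmt_8 (n : ℕ) (hn : 1 ≤ n) (c : ℂ) (hc : c ≠ 0)
    (f f' : ℝ → ℂ) (hf1 : f 1 = 0)
    (hf' : LocallyIntegrableOn f' (Set.Ici 1))
    (hAC : ∀ t : ℝ, 1 ≤ t → f t = f 1 + ∫ u in (1:ℝ)..t, f' u) :
    ∀ t : ℝ, 1 < t →
      PsiOp n c (fun u => (u : ℂ) * f' u - c * f u) t
        = (1 / (Real.log t : ℂ)) *
            ∫ v in (0:ℝ)..1, ((1 - v : ℝ) : ℂ) ^ (n - 1) * f (t ^ v) := by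
  intro t ht
  have ht0 : (0:ℝ) < t := by linarith
  have hL : 0 < Real.log t := Real.log_pos ht
  have hLne : ((Real.log t : ℝ) : ℂ) ≠ 0 := Complex.ofReal_ne_zero.mpr (ne_of_gt hL)
  have hrpow_ge : ∀ v : ℝ, 0 ≤ v → 1 ≤ t ^ v := by
    intro v hv
    calc (1:ℝ) = t ^ (0:ℝ) := (Real.rpow_zero t).symm
    _ ≤ t ^ v := (Real.rpow_le_rpow_left_iff ht).mpr hv
  -- integrability of f' on (1, t]
  have hf'int : IntegrableOn f' (Set.Ioc 1 t) := by
    have : IntegrableOn f' (Set.Icc 1 t) :=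
      hf'.integrableOn_compact_subset (Set.Icc_subset_Ici_self) isCompact_Icc
    exact this.mono_set Set.Ioc_subset_Icc_self
  -- the substituted integrable density
  have hψint : IntegrableOn (fun w => (t ^ w * Real.log t : ℝ) • f' (t ^ w))
      (Set.Ioc (0:ℝ) 1) := by
    apply subst_intble t ht 1 zero_le_one f'
    rw [Real.rpow_one]
    exact hf'int
  -- the fundamental theorem for f ∘ rpow
  have hF_eq : ∀ v ∈ Set.Icc (0:ℝ) 1,
      f (t ^ v) = ∫ w in Set.Ioc 0 v, (t ^ w * Real.log t : ℝ) • f' (t ^ w) := by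
    intro v hv
    rw [hAC (t ^ v) (hrpow_ge v hv.1), hf1, zero_add,
      intervalIntegral.integral_of_le (hrpow_ge v hv.1), subst_int t ht v hv.1 f']
  -- continuity facts
  have hGcont : Continuous fun v : ℝ => Haux (c * (Real.log t : ℝ)) n (1 - v) :=
    (Haux_cont _ n).comp (continuous_const.sub continuous_id)
  have hFcont : ContinuousOn (fun v : ℝ => f (t ^ v)) (Set.Icc (0:ℝ) 1) := by
    have hψicc : IntegrableOn (fun w => (t ^ w * Real.log t : ℝ) • f' (t ^ w))
        (Set.Icc (0:ℝ) 1) := by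
      rwa [integrableOn_Icc_iff_integrableOn_Ioc]
    exact (intervalIntegral.continuousOn_primitive hψicc).congr hF_eq
  -- interval integrability of the pieces
  have h1F : IntervalIntegrable (fun v : ℝ => ((1 - v : ℝ) : ℂ) ^ (n - 1) * f (t ^ v))
      volume 0 1 := by
    apply ContinuousOn.intervalIntegrable
    rw [Set.uIcc_of_le zero_le_one]
    exact (((Complex.continuous_ofReal.comp
      (continuous_const.sub continuous_id)).pow _).continuousOn).mul hFcont
  have hGF : IntervalIntegrable
      (fun v : ℝ => Haux (c * (Real.log t : ℝ)) n (1 - v) * f (t ^ v)) volume 0 1 := by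
    apply ContinuousOn.intervalIntegrable
    rw [Set.uIcc_of_le zero_le_one]
    exact hGcont.continuousOn.mul hFcont
  have hGT : IntervalIntegrable
      (fun v : ℝ => Haux (c * (Real.log t : ℝ)) n (1 - v)
        * (((t ^ v : ℝ) : ℂ) * f' (t ^ v))) volume 0 1 := by
    rw [intervalIntegrable_iff_integrableOn_Ioc_of_le zero_le_one]
    obtain ⟨C, hC⟩ := (isCompact_Icc (a := (0:ℝ)) (b := 1)).exists_bound_of_continuousOn
      hGcont.continuousOn
    have hbd : IntegrableOn (fun v : ℝ => Haux (c * (Real.log t : ℝ)) n (1 - v)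
        * ((t ^ v * Real.log t : ℝ) • f' (t ^ v))) (Set.Ioc (0:ℝ) 1) := by
      apply MeasureTheory.Integrable.bdd_mul hψint
        (hGcont.aestronglyMeasurable.restrict)
      exact (ae_restrict_iff' measurableSet_Ioc).mpr
        (Filter.Eventually.of_forall fun v hv => hC v (Set.Ioc_subset_Icc_self hv))
    have h2 : IntegrableOn (fun v : ℝ => (((Real.log t : ℝ) : ℂ))⁻¹
        * (Haux (c * (Real.log t : ℝ)) n (1 - v)
          * ((t ^ v * Real.log t : ℝ) • f' (t ^ v)))) (Set.Ioc (0:ℝ) 1) volume :=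
      hbd.const_mul (((Real.log t : ℝ) : ℂ))⁻¹
    apply MeasureTheory.IntegrableOn.congr_fun h2 ?_ measurableSet_Ioc
    intro v _
    show (((Real.log t : ℝ) : ℂ))⁻¹ * (Haux (c * (Real.log t : ℝ)) n (1 - v)
          * ((t ^ v * Real.log t : ℝ) • f' (t ^ v)))
      = Haux (c * (Real.log t : ℝ)) n (1 - v) * (((t ^ v : ℝ) : ℂ) * f' (t ^ v))
    rw [Complex.real_smul]
    push_cast
    field_simp
  -- the main identity from `core`
  have hcore := core n hn (c * (Real.log t : ℝ))
    (fun w => (t ^ w * Real.log t : ℝ) • f' (t ^ w)) hψint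
    (fun v => f (t ^ v)) hF_eq
  -- rewrite the RHS of hcore in terms of G·T
  have hGψT : (∫ w in (0:ℝ)..1, Haux (c * (Real.log t : ℝ)) n (1 - w)
        * ((t ^ w * Real.log t : ℝ) • f' (t ^ w)))
      = ((Real.log t : ℝ) : ℂ) * ∫ v in (0:ℝ)..1,
          Haux (c * (Real.log t : ℝ)) n (1 - v) * (((t ^ v : ℝ) : ℂ) * f' (t ^ v)) := by
    rw [← intervalIntegral.integral_const_mul]
    apply intervalIntegral.integral_congr
    intro v _
    show Haux (c * (Real.log t : ℝ)) n (1 - v) * ((t ^ v * Real.log t : ℝ) • f' (t ^ v)) = _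
    rw [Complex.real_smul]
    push_cast
    ring
  -- split the LHS of hcore
  have hsplit : (∫ v in (0:ℝ)..1, (((1 - v : ℝ) : ℂ) ^ (n - 1)
        + (c * (Real.log t : ℝ)) * Haux (c * (Real.log t : ℝ)) n (1 - v)) * f (t ^ v))
      = (∫ v in (0:ℝ)..1, ((1 - v : ℝ) : ℂ) ^ (n - 1) * f (t ^ v))
        + (c * (Real.log t : ℝ)) * ∫ v in (0:ℝ)..1,
            Haux (c * (Real.log t : ℝ)) n (1 - v) * f (t ^ v) := by
    rw [show (fun v : ℝ => (((1 - v : ℝ) : ℂ) ^ (n - 1)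
        + (c * (Real.log t : ℝ)) * Haux (c * (Real.log t : ℝ)) n (1 - v)) * f (t ^ v))
      = fun v : ℝ => ((1 - v : ℝ) : ℂ) ^ (n - 1) * f (t ^ v)
        + (c * (Real.log t : ℝ))
          * (Haux (c * (Real.log t : ℝ)) n (1 - v) * f (t ^ v)) from
      funext fun v => by ring]
    rw [intervalIntegral.integral_add h1F (hGF.const_mul _),
      intervalIntegral.integral_const_mul]
  -- split the Psi integral
  have hPsiSplit : (∫ v in (0:ℝ)..1, Haux (c * (Real.log t : ℝ)) n (1 - v)
        * (((t ^ v : ℝ) : ℂ) * f' (t ^ v) - c * f (t ^ v)))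
      = (∫ v in (0:ℝ)..1, Haux (c * (Real.log t : ℝ)) n (1 - v)
          * (((t ^ v : ℝ) : ℂ) * f' (t ^ v)))
        - c * ∫ v in (0:ℝ)..1, Haux (c * (Real.log t : ℝ)) n (1 - v) * f (t ^ v) := by
    rw [show (fun v : ℝ => Haux (c * (Real.log t : ℝ)) n (1 - v)
        * (((t ^ v : ℝ) : ℂ) * f' (t ^ v) - c * f (t ^ v)))
      = fun v : ℝ => Haux (c * (Real.log t : ℝ)) n (1 - v)
          * (((t ^ v : ℝ) : ℂ) * f' (t ^ v))
        - c * (Haux (c * (Real.log t : ℝ)) n (1 - v) * f (t ^ v)) from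
      funext fun v => by ring]
    rw [intervalIntegral.integral_sub hGT (hGF.const_mul _),
      intervalIntegral.integral_const_mul]
  -- assemble
  rw [psi_rewrite n hn c _ t]
  have hgoal : (∫ v in (0:ℝ)..1, Haux (c * (Real.log t : ℝ)) n (1 - v)
      * ((fun u : ℝ => (u : ℂ) * f' u - c * f u) (t ^ v)))
      = ∫ v in (0:ℝ)..1, Haux (c * (Real.log t : ℝ)) n (1 - v)
        * (((t ^ v : ℝ) : ℂ) * f' (t ^ v) - c * f (t ^ v)) := rfl
  rw [hgoal, hPsiSplit]
  beta_reduce at hcore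
  rw [hsplit, hGψT] at hcore
  set X := ∫ v in (0:ℝ)..1, Haux (c * (Real.log t : ℝ)) n (1 - v)
    * (((t ^ v : ℝ) : ℂ) * f' (t ^ v)) with hX
  set Y := ∫ v in (0:ℝ)..1, Haux (c * (Real.log t : ℝ)) n (1 - v) * f (t ^ v) with hY
  set Z := ∫ v in (0:ℝ)..1, ((1 - v : ℝ) : ℂ) ^ (n - 1) * f (t ^ v) with hZ
  rw [one_div, inv_mul_eq_div, eq_div_iff hLne]
  linear_combination (-1 : ℂ) * hcore
end

section
/- Let s ∈ ℂ with Re(s) ∈ (0,1), let η : [1,∞) → ℝ be bounded and locally integrable, and suppose the solutions ψ_s(1,·) and ψ_{1−s̄}(1,·) of dx/dt = w t^{−1} x + (1−w) t^{−1} η(t) with initial value 1 (for w = s and w = 1−s̄ respectively) are both bounded on [1,∞). Define φ_s(t) = (ψ_s(1,t) − 1)/(1−s) and φ_{1−s̄}(t) = (ψ_{1−s̄}(1,t) − 1)/s̄, and δ_s = φ_s − φ_{1−s̄}. Then with σ = Re(s), δ_s satisfies both t δ_s′(t) = s δ_s(t) − (1−2σ)(φ_{1−s̄}(t) + 1/(s̄(1−s)))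 and t δ_s′(t) = (1−s̄) δ_s(t) − (1−2σ)(φ_s(t) + 1/(s̄(1−s))), with δ_s(1) = 0. -/
open MeasureTheory intervalIntegral

/-- The solution formula of the parametrized ODE with initial value `1`. -/
noncomputable def psiSol (w : ℂ) (η : ℝ → ℝ) (t : ℝ) : ℂ :=
  (t : ℂ) ^ w * (1 + (1 - w) * ∫ u in (1:ℝ)..t, (u : ℂ) ^ (-1 - w) * (η u : ℂ))

lemma psiSol_one (w : ℂ) (η : ℝ → ℝ) : psiSol w η 1 = 1 := by
  simp [psiSol]

lemma psiSol_hasDerivAt (w : ℂ) (η : ℝ → ℝ)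
    (hloc : LocallyIntegrableOn η (Set.Ici 1)) (t : ℝ) (ht : 1 < t)
    (hcont : ContinuousAt η t) :
    HasDerivAt (psiSol w η) ((w * psiSol w η t + (1 - w) * (η t : ℂ)) / (t : ℂ)) t := by
  have ht0 : (0:ℝ) < t := lt_trans one_pos ht
  have htC : (t:ℂ) ≠ 0 := by exact_mod_cast ht0.ne'
  set f : ℝ → ℂ := fun u => (u : ℂ) ^ (-1 - w) * (η u : ℂ) with hf
  -- interval integrability on [1, t]
  have hηint : IntegrableOn (fun u => ((η u : ℂ))) (Set.Icc 1 t) := by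
    exact Integrable.ofReal (hloc.integrableOn_compact_subset Set.Icc_subset_Ici_self isCompact_Icc)
  have hcont' : ContinuousOn (fun u : ℝ => (u : ℂ) ^ (-1 - w)) (Set.Icc 1 t) := by
    apply ContinuousOn.cpow_const Complex.continuous_ofReal.continuousOn
    intro x hx
    exact Or.inl (by simpa using lt_of_lt_of_le one_pos hx.1)
  have hint : IntervalIntegrable f volume 1 t := by
    rw [intervalIntegrable_iff_integrableOn_Icc_of_le ht.le]
    exact hηint.continuousOn_mul hcont' isCompact_Icc
  have hmeas : StronglyMeasurableAtFilter f (nhds t) := by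
    refine ⟨Set.Ioi 1, Ioi_mem_nhds ht, ?_⟩
    have h1 : AEStronglyMeasurable (fun u => ((η u : ℂ))) (volume.restrict (Set.Ioi 1)) := by
      exact (Complex.continuous_ofReal.comp_aestronglyMeasurable
        hloc.aestronglyMeasurable).mono_measure
        (Measure.restrict_mono Set.Ioi_subset_Ici_self le_rfl)
    have h2 : AEStronglyMeasurable (fun u : ℝ => (u : ℂ) ^ (-1 - w))
        (volume.restrict (Set.Ioi 1)) := by
      refine ContinuousOn.aestronglyMeasurable ?_ measurableSet_Ioi
      apply ContinuousOn.cpow_const Complex.continuous_ofReal.continuousOn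
      intro x hx
      exact Or.inl (by simpa using lt_trans one_pos hx)
    exact h2.mul h1
  have hfc : ContinuousAt f t := by
    apply ContinuousAt.mul
    · exact (continuousAt_cpow_const (Or.inl (by simpa using ht0))).comp
        Complex.continuous_ofReal.continuousAt
    · exact Complex.continuous_ofReal.continuousAt.comp hcont
  have hF : HasDerivAt (fun x => ∫ u in (1:ℝ)..x, f u) (f t) t :=
    intervalIntegral.integral_hasDerivAt_right hint hmeas hfc
  have hpow : HasDerivAt (fun x : ℝ => (x : ℂ) ^ w) (w * (t:ℂ) ^ (w - 1)) t := by
    exact ((Complex.hasStrictDerivAt_cpow_const (c := w)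
      (Or.inl (by simpa using ht0))).hasDerivAt).comp_ofReal
  have hD := hpow.mul ((hF.const_mul (1 - w)).const_add 1)
  have : HasDerivAt (psiSol w η)
      (w * (t:ℂ) ^ (w - 1) * (1 + (1 - w) * ∫ u in (1:ℝ)..t, f u)
        + (t:ℂ) ^ w * ((1 - w) * f t)) t := by
    exact hD
  convert this using 1
  rw [hf]
  have h1 : (t:ℂ) ^ (w - 1) = (t:ℂ) ^ w / (t:ℂ) := by
    rw [Complex.cpow_sub _ _ htC, Complex.cpow_one]
  have h2 : (t:ℂ) ^ w * (t:ℂ) ^ (-1 - w) = ((t:ℂ))⁻¹ := by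
    rw [← Complex.cpow_add _ _ htC]
    simp [Complex.cpow_neg_one]
  simp only [psiSol]
  rw [h1, show (t:ℂ)^w * ((1-w) * ((t:ℂ)^(-1-w) * (η t : ℂ)))
      = (1-w) * (η t : ℂ) * ((t:ℂ)^w * (t:ℂ)^(-1-w)) by ring, h2]
  field_simp


theorem stmt_10 (s : ℂ) (hs : s.re ∈ Set.Ioo (0:ℝ) 1)
    (η : ℝ → ℝ) (hbd : ∃ C, ∀ t : ℝ, 1 ≤ t → |η t| ≤ C)
    (hloc : LocallyIntegrableOn η (Set.Ici 1))
    (hbd₁ : ∃ M, ∀ t : ℝ, 1 ≤ t → ‖psiSol s η t‖ ≤ M)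
    (hbd₂ : ∃ M, ∀ t : ℝ, 1 ≤ t → ‖psiSol (1 - (starRingEnd ℂ) s) η t‖ ≤ M)
    (φ₁ φ₂ δ : ℝ → ℂ)
    (hφ₁ : φ₁ = fun t => (psiSol s η t - 1) / (1 - s))
    (hφ₂ : φ₂ = fun t => (psiSol (1 - (starRingEnd ℂ) s) η t - 1) / (starRingEnd ℂ) s)
    (hδ : δ = φ₁ - φ₂) (σ : ℝ) (hσ : σ = s.re) :
    δ 1 = 0 ∧
    (∀ t : ℝ, 1 < t → ContinuousAt η t →
      HasDerivAt δ
        ((s * δ t - (1 - 2 * (σ : ℂ)) * (φ₂ t + 1 / ((starRingEnd ℂ) s * (1 - s)))) / (t : ℂ)) t) ∧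
    (∀ t : ℝ, 1 < t → ContinuousAt η t →
      HasDerivAt δ
        (((1 - (starRingEnd ℂ) s) * δ t
          - (1 - 2 * (σ : ℂ)) * (φ₁ t + 1 / ((starRingEnd ℂ) s * (1 - s)))) / (t : ℂ)) t) := by
  subst hφ₁ hφ₂ hδ hσ
  have hs0 : s ≠ 0 := by
    intro h; rw [h] at hs; simp at hs
  have hs1 : (1:ℂ) - s ≠ 0 := by
    intro h
    have : s = 1 := by linear_combination -h
    rw [this] at hs; simp at hs
  have hc0 : (starRingEnd ℂ) s ≠ 0 := by
    intro h; apply hs0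
    have := congrArg (starRingEnd ℂ) h
    simpa using this
  have h2re : 2 * ((s.re : ℝ) : ℂ) = s + (starRingEnd ℂ) s := by
    rw [Complex.add_conj]; push_cast; ring
  refine ⟨?_, ?_, ?_⟩
  · simp [psiSol_one]
  all_goals
  · intro t ht hct
    have ht0 : (0:ℝ) < t := lt_trans one_pos ht
    have htC : (t:ℂ) ≠ 0 := by exact_mod_cast ht0.ne'
    have hA := psiSol_hasDerivAt s η hloc t ht hct
    have hB := psiSol_hasDerivAt (1 - (starRingEnd ℂ) s) η hloc t ht hct
    have hD := ((hA.sub_const 1).div_const (1 - s)).sub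
      ((hB.sub_const 1).div_const ((starRingEnd ℂ) s))
    refine hD.congr_deriv ?_
    symm
    rw [show (1:ℂ) - 2 * ((s.re : ℝ) : ℂ) = 1 - (s + (starRingEnd ℂ) s) by rw [h2re]]
    field_simp [htC, hs1, hc0]
    simp only [Pi.sub_apply]
    field_simp
    ring
end
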